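/- Let a ∈ (0, 1), let W be a measurable space, and let P, Q be probability measures on W. Set M = (1 − a)·P + a·Q, let β be the probability measure on Bool with β({false}) = 1 − a and β({true}) = a, and let R be the joint probability measure on W × Bool given by R = (1 − a) • (P ⊗ δ_false) + a • (Q ⊗ δ_true). Then the mutual information between W and the domain indicator equals the generalized Jensen–Shannon divergence: KL(R ‖ M ⊗ β) = (1 − a)·KL(P ‖ M) + a·KL(Q ‖ M). -/

import Mathlib

open MeasureTheory
open scoped Classical ENNReal

/-- Kullback–Leibler divergence between two measures, with value `⊤` unless `μ ≪ ν` and the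
log-likelihood ratio is integrable. -/
noncomputable def klDiv {W : Type*} [MeasurableSpace W] (μ ν : Measure W) : EReal :=
  if μ ≪ ν ∧ Integrable (llr μ ν) μ then ((∫ x, llr μ ν x ∂μ : ℝ) : EReal) else ⊤

section Aux

lemma klDiv_shape {W : Type*} [MeasurableSpace W] (μ ν : Measure W) :
    klDiv μ ν = ⊤ ∨ ∃ x : ℝ, klDiv μ ν = (x : EReal) := by
  unfold klDiv
  split
  · exact Or.inr ⟨_, rfl⟩
  · exact Or.inl rfl

lemma coe_mul_klDiv_ne_bot {W : Type*} [MeasurableSpace W] {c : ℝ} (hc : 0 < c)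
    (μ ν : Measure W) : (c : EReal) * klDiv μ ν ≠ ⊥ := by
  rcases klDiv_shape μ ν with h | ⟨x, h⟩
  · rw [h, EReal.coe_mul_top_of_pos hc]; exact (by simp)
  · rw [h, ← EReal.coe_mul]; exact EReal.coe_ne_bot _

lemma withDensity_map_embed {X Y : Type*} [MeasurableSpace X] [MeasurableSpace Y]
    {g : X → Y} (hg : MeasurableEmbedding g) (μ : Measure X) {f : Y → ℝ≥0∞}
    (hf : Measurable f) :
    (μ.map g).withDensity f = (μ.withDensity (fun x => f (g x))).map g := by
  ext s hs
  rw [withDensity_apply _ hs, hg.map_apply, withDensity_apply _ (hg.measurable hs),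
    setLIntegral_map hs hf hg.measurable]

lemma prod_smul_right {X Y : Type*} [MeasurableSpace X] [MeasurableSpace Y]
    (μ : Measure X) [SFinite μ] (ν : Measure Y) [SFinite ν] (c : ℝ≥0∞) :
    μ.prod (c • ν) = c • μ.prod ν := by
  ext s hs
  rw [Measure.smul_apply, Measure.prod_apply hs, Measure.prod_apply hs, smul_eq_mul,
    ← MeasureTheory.lintegral_const_mul _ (measurable_measure_prodMk_left hs)]
  simp

end Aux

/-- **Eq. (9)**: the mutual information between the representation and the binary domain
indicator equals the generalized Jensen–Shannon divergence between the two domain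
distributions: `KL(R ‖ M ⊗ β) = (1-a)·KL(P ‖ M) + a·KL(Q ‖ M)`. -/
theorem mutualInfo_eq_genJS
    {W : Type*} [MeasurableSpace W]
    (a : ℝ) (ha0 : 0 < a) (ha1 : a < 1)
    (P Q : Measure W) [IsProbabilityMeasure P] [IsProbabilityMeasure Q] :
    klDiv
        (ENNReal.ofReal (1 - a) • P.prod (Measure.dirac false) +
          ENNReal.ofReal a • Q.prod (Measure.dirac true))
        ((ENNReal.ofReal (1 - a) • P + ENNReal.ofReal a • Q).prod
          (ENNReal.ofReal (1 - a) • Measure.dirac false + ENNReal.ofReal a • Measure.dirac true)) =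
      ((1 - a : ℝ) : EReal) * klDiv P (ENNReal.ofReal (1 - a) • P + ENNReal.ofReal a • Q) +
        ((a : ℝ) : EReal) * klDiv Q (ENNReal.ofReal (1 - a) • P + ENNReal.ofReal a • Q) := by
  have ha1' : 0 < 1 - a := by linarith
  set c : ℝ≥0∞ := ENNReal.ofReal (1 - a) with hc_def
  set d : ℝ≥0∞ := ENNReal.ofReal a with hd_def
  have hc0 : c ≠ 0 := by simp [hc_def, ENNReal.ofReal_eq_zero]; linarith
  have hd0 : d ≠ 0 := by simp [hd_def, ENNReal.ofReal_eq_zero]; linarith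
  have hct : c ≠ ⊤ := ENNReal.ofReal_ne_top
  have hdt : d ≠ ⊤ := ENNReal.ofReal_ne_top
  have hcr : c.toReal = 1 - a := ENNReal.toReal_ofReal ha1'.le
  have hdr : d.toReal = a := ENNReal.toReal_ofReal ha0.le
  set M : Measure W := c • P + d • Q with hM_def
  set β : Measure Bool := c • Measure.dirac false + d • Measure.dirac true with hβ_def
  set R : Measure (W × Bool) :=
    c • P.prod (Measure.dirac false) + d • Q.prod (Measure.dirac true) with hR_def
  have hcd1 : c + d = 1 := by
    rw [hc_def, hd_def, ← ENNReal.ofReal_add (by linarith) ha0.le]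
    norm_num
  haveI : IsProbabilityMeasure M := ⟨by simp [hM_def]; rw [← hcd1]⟩
  haveI : IsProbabilityMeasure β := ⟨by simp [hβ_def]; rw [← hcd1]⟩
  have hPM : P ≪ M := by
    refine Measure.AbsolutelyContinuous.mk fun s hs h0 => ?_
    simp only [hM_def, Measure.coe_add, Pi.add_apply, Measure.coe_smul, Pi.smul_apply,
      smul_eq_mul, add_eq_zero, mul_eq_zero] at h0
    exact h0.1.resolve_left hc0
  have hQM : Q ≪ M := by
    refine Measure.AbsolutelyContinuous.mk fun s hs h0 => ?_
    simp only [hM_def, Measure.coe_add, Pi.add_apply, Measure.coe_smul, Pi.smul_apply,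
      smul_eq_mul, add_eq_zero, mul_eq_zero] at h0
    exact h0.2.resolve_left hd0
  -- the density of R with respect to M.prod β
  set f : W × Bool → ℝ≥0∞ :=
    fun p => if p.2 = true then Q.rnDeriv M p.1 else P.rnDeriv M p.1 with hf_def
  have hf_meas : Measurable f := by
    refine Measurable.ite (measurable_snd (measurableSet_singleton true)) ?_ ?_
    · exact (Q.measurable_rnDeriv M).comp measurable_fst
    · exact (P.measurable_rnDeriv M).comp measurable_fst
  have hemb : ∀ b : Bool, MeasurableEmbedding (fun x : W => (x, b)) := fun b =>
    measurableEmbedding_prod_mk_right b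
  have hf_false : (fun x : W => f (x, false)) = P.rnDeriv M := by
    funext x; simp [hf_def]
  have hf_true : (fun x : W => f (x, true)) = Q.rnDeriv M := by
    funext x; simp [hf_def]
  have hwd : (M.prod β).withDensity f = R := by
    have h1 : M.prod β = c • M.prod (Measure.dirac false) + d • M.prod (Measure.dirac true) := by
      rw [hβ_def, Measure.prod_add, prod_smul_right, prod_smul_right]
    rw [h1, withDensity_add_measure, withDensity_smul_measure, withDensity_smul_measure,
      Measure.prod_dirac, Measure.prod_dirac,
      withDensity_map_embed (hemb false) M hf_meas,
      withDensity_map_embed (hemb true) M hf_meas, hf_false, hf_true,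
      Measure.withDensity_rnDeriv_eq _ _ hPM, Measure.withDensity_rnDeriv_eq _ _ hQM,
      hR_def, Measure.prod_dirac, Measure.prod_dirac]
  have hRac : R ≪ M.prod β := hwd ▸ withDensity_absolutelyContinuous _ _
  have hrn : R.rnDeriv (M.prod β) =ᵐ[M.prod β] f := by
    rw [← hwd]; exact Measure.rnDeriv_withDensity _ hf_meas
  have hrnR : R.rnDeriv (M.prod β) =ᵐ[R] f := hRac.ae_le hrn
  set g : W × Bool → ℝ := fun p => if p.2 = true then llr Q M p.1 else llr P M p.1 with hg_def
  have hg_false : (fun x : W => g (x, false)) = llr P M := by funext x; simp [hg_def]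
  have hg_true : (fun x : W => g (x, true)) = llr Q M := by funext x; simp [hg_def]
  have hllr : llr R (M.prod β) =ᵐ[R] g := by
    filter_upwards [hrnR] with p hp
    rcases p with ⟨x, b⟩
    have h1 : llr R (M.prod β) (x, b) = Real.log (f (x, b)).toReal := by
      rw [llr_def]; simp only [hp]
    cases b
    · rw [h1, congrFun hf_false x, congrFun hg_false x]; rfl
    · rw [h1, congrFun hf_true x, congrFun hg_true x]; rfl
  have hint_false : Integrable g (P.prod (Measure.dirac false)) ↔ Integrable (llr P M) P := by
    rw [Measure.prod_dirac, (hemb false).integrable_map_iff]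
    exact integrable_congr (Filter.EventuallyEq.of_eq hg_false)
  have hint_true : Integrable g (Q.prod (Measure.dirac true)) ↔ Integrable (llr Q M) Q := by
    rw [Measure.prod_dirac, (hemb true).integrable_map_iff]
    exact integrable_congr (Filter.EventuallyEq.of_eq hg_true)
  have hint_iff : Integrable (llr R (M.prod β)) R ↔
      (Integrable (llr P M) P ∧ Integrable (llr Q M) Q) := by
    rw [integrable_congr hllr, hR_def, integrable_add_measure,
      integrable_smul_measure hc0 hct, integrable_smul_measure hd0 hdt,
      hint_false, hint_true]
  by_cases hint : Integrable (llr P M) P ∧ Integrable (llr Q M) Q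
  · have hintR : Integrable (llr R (M.prod β)) R := hint_iff.mpr hint
    have hval : ∫ p, llr R (M.prod β) p ∂ R =
        (1 - a) * ∫ x, llr P M x ∂P + a * ∫ x, llr Q M x ∂Q := by
      rw [integral_congr_ae hllr, hR_def, integral_add_measure
          ((integrable_smul_measure hc0 hct).mpr (hint_false.mpr hint.1))
          ((integrable_smul_measure hd0 hdt).mpr (hint_true.mpr hint.2)),
        integral_smul_measure, integral_smul_measure, hcr, hdr,
        Measure.prod_dirac, Measure.prod_dirac,
        (hemb false).integral_map, (hemb true).integral_map]
      simp only [smul_eq_mul]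
      rw [show (fun x : W => g ((fun x : W => (x, false)) x)) = llr P M from hg_false,
        show (fun x : W => g ((fun x : W => (x, true)) x)) = llr Q M from hg_true]
    unfold klDiv
    rw [if_pos ⟨hRac, hintR⟩, if_pos ⟨hPM, hint.1⟩, if_pos ⟨hQM, hint.2⟩, hval]
    push_cast
    rfl
  · have hnR : ¬ Integrable (llr R (M.prod β)) R := fun h => hint (hint_iff.mp h)
    unfold klDiv
    rw [if_neg (fun h => hnR h.2)]
    rcases not_and_or.mp hint with h | h
    · rw [if_neg (fun hh : P ≪ M ∧ Integrable (llr P M) P => h hh.2),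
        EReal.coe_mul_top_of_pos ha1',
        EReal.top_add_of_ne_bot]
      by_cases hq : Q ≪ M ∧ Integrable (llr Q M) Q
      · rw [if_pos hq, ← EReal.coe_mul]; exact EReal.coe_ne_bot _
      · rw [if_neg hq, EReal.coe_mul_top_of_pos ha0]; exact (by simp)
    · rw [if_neg (fun hh : Q ≪ M ∧ Integrable (llr Q M) Q => h hh.2),
        EReal.coe_mul_top_of_pos ha0,
        EReal.add_top_of_ne_bot]
      by_cases hp : P ≪ M ∧ Integrable (llr P M) P
      · rw [if_pos hp, ← EReal.coe_mul]; exact EReal.coe_ne_bot _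
      · rw [if_neg hp, EReal.coe_mul_top_of_pos ha1']; exact (by simp)
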